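/- Fix a positive integer T and a ground-truth vector g ∈ ℝ^T, and let Φ ∈ ℂ^{T×T} be the discrete Fourier matrix. Let V be a (possibly infinite) index set of nodes, each node v equipped with vectors d_{v,1}, d_{v,2} ∈ ℝ^T and label y_v = ⟨g, d_{v,1}⟩. Assume the frequency bandwidths of invariant and variant patterns never overlap: for all nodes u, v and every index i, (conj(Φ d_{u,1}) ⊙ Φ d_{u,1})_i · (conj(Φ d_{v,2}) ⊙ Φ d_{v,2})_i = 0. Define the spectral mask m ∈ ℂ^T by m_i = 0 if there exists a node v with (conj(Φ d_{v,2}) ⊙ Φ d_{v,2})_i ≠ 0, and m_i = 1 otherwise, and set w = Φ g ∈ ℂ^T. Then the spectral classifier predicts perfectly on every node: for every v, w^H ( m ⊙ Φ(d_{v,1} + d_{v,2}) ) = ⟨g, d_{v,1}⟩ = y_v. Consequently w minimizes the empirical risk on any training subset of V, and for every ε > 0, every node v ∈ V has squared error (ŷ_v − y_v)² = 0 < ε, no matter how large ‖d_{v,2}‖₂ is. -/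
import Mathlib


/-- The discrete Fourier matrix `Φ ∈ ℂ^{T×T}`, `Φ k t = (1/√T) · exp(-2πi·k·t/T)`. -/
noncomputable def dft (T : ℕ) : Matrix (Fin T) (Fin T) ℂ :=
  fun k t => ((1 / Real.sqrt T : ℝ) : ℂ) *
    Complex.exp (-(2 * (Real.pi : ℂ) * Complex.I * ((k : ℕ) : ℂ) * ((t : ℕ) : ℂ)) / (T : ℂ))

/-- The spectrum of a real vector `d ∈ ℝ^T`: `Φ d`, viewing `d` as a complex vector. -/
noncomputable def spec (T : ℕ) (d : Fin T → ℝ) : Fin T → ℂ :=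
  (dft T).mulVec fun t => (d t : ℂ)

/-- The spectral prediction `ŷ = wᴴ (m ⊙ z)` for a classifier `w`, mask `m`, and
spectrum `z` in `ℂ^T`. -/
noncomputable def specPred (T : ℕ) (w m z : Fin T → ℂ) : ℂ :=
  ∑ i, (starRingEnd ℂ) (w i) * (m i * z i)

set_option maxHeartbeats 1000000 in
lemma dft_ortho (T : ℕ) (hT : 0 < T) (t s : Fin T) :
    ∑ k : Fin T, (starRingEnd ℂ) (dft T k t) * dft T k s = if t = s then 1 else 0 := by
  have hTc : (T : ℂ) ≠ 0 := by exact_mod_cast hT.ne'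
  set ζ : ℂ := Complex.exp (2 * Real.pi * Complex.I * (((t : ℕ) : ℂ) - ((s : ℕ) : ℂ)) / T) with hζ
  have hterm : ∀ k : Fin T, (starRingEnd ℂ) (dft T k t) * dft T k s
      = (1 / T : ℂ) * ζ ^ (k : ℕ) := by
    intro k
    simp only [dft, map_mul, Complex.conj_ofReal, ← Complex.exp_conj, map_div₀, map_neg,
      map_mul, Complex.conj_I, Complex.conj_ofNat, map_natCast, map_ofNat]
    have h1 : ((1 / Real.sqrt T : ℝ) : ℂ) * ((1 / Real.sqrt T : ℝ) : ℂ) = 1 / T := by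
      rw [← Complex.ofReal_mul]
      rw [show (1 / Real.sqrt T) * (1 / Real.sqrt T) = 1 / (Real.sqrt T * Real.sqrt T) by ring,
        Real.mul_self_sqrt (by positivity)]
      simp
    rw [mul_mul_mul_comm, h1, hζ, ← Complex.exp_nat_mul, ← Complex.exp_add]
    congr 1
    ring
  rw [Finset.sum_congr rfl (fun k _ => hterm k), ← Finset.mul_sum]
  have hsum : ∑ k : Fin T, ζ ^ (k : ℕ) = ∑ k ∈ Finset.range T, ζ ^ k :=
    (Finset.sum_range fun k => ζ ^ k).symm ▸ (Fin.sum_univ_eq_sum_range (fun k => ζ ^ k) T)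
  rw [hsum]
  by_cases hts : t = s
  · subst hts
    have hz1 : ζ = 1 := by rw [hζ]; simp
    simp only [hz1, one_pow, Finset.sum_const, Finset.card_range, nsmul_eq_mul, mul_one,
      if_pos rfl]
    rw [one_div, inv_mul_cancel₀ hTc]; simp
  · have hζT : ζ ^ T = 1 := by
      rw [hζ, ← Complex.exp_nat_mul]
      rw [← Complex.exp_int_mul_two_pi_mul_I (((t : ℕ) : ℤ) - ((s : ℕ) : ℤ))]
      congr 1
      push_cast
      rw [mul_div_assoc', mul_comm, mul_div_assoc, div_self hTc, mul_one]
      ring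
    have hζ1 : ζ ≠ 1 := by
      rw [hζ, Ne, Complex.exp_eq_one_iff]
      rintro ⟨n, hn⟩
      have h2πI : (2 : ℂ) * Real.pi * Complex.I ≠ 0 := by
        simp [Real.pi_ne_zero, Complex.I_ne_zero]
      have key : (((t : ℕ) : ℂ) - ((s : ℕ) : ℂ)) / T = (n : ℂ) :=
        mul_left_cancel₀ h2πI (by linear_combination hn)
      have key2 : (((t : ℕ) : ℂ) - ((s : ℕ) : ℂ)) = n * T := by
        rw [div_eq_iff hTc] at key; linear_combination key
      have key3 : ((t : ℕ) : ℤ) - ((s : ℕ) : ℤ) = n * T := by exact_mod_cast key2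
      have hTz : (0 : ℤ) < T := by exact_mod_cast hT
      have ht' : ((t : ℕ) : ℤ) < T := by exact_mod_cast t.isLt
      have hs' : ((s : ℕ) : ℤ) < T := by exact_mod_cast s.isLt
      have ht0 : (0 : ℤ) ≤ ((t : ℕ) : ℤ) := by positivity
      have hs0 : (0 : ℤ) ≤ ((s : ℕ) : ℤ) := by positivity
      rcases lt_trichotomy n 0 with h | h | h
      · have h1 : n ≤ -1 := by omega
        nlinarith
      · subst h
        simp at key3
        exact hts (Fin.ext (by omega))
      · have h1 : 1 ≤ n := by omega
        nlinarith
    rw [geom_sum_eq hζ1, hζT]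
    simp [hts]

lemma spec_dot (T : ℕ) (hT : 0 < T) (g d : Fin T → ℝ) :
    ∑ i, (starRingEnd ℂ) (((dft T).mulVec fun t => (g t : ℂ)) i) * spec T d i
      = ((∑ t, g t * d t : ℝ) : ℂ) := by
  have h1 : ∀ i : Fin T,
      (starRingEnd ℂ) (((dft T).mulVec fun t => (g t : ℂ)) i) * spec T d i
        = ∑ t, ∑ s, ((g t : ℂ) * (d s : ℂ)) * ((starRingEnd ℂ) (dft T i t) * dft T i s) := by
    intro i
    simp only [spec, Matrix.mulVec, dotProduct, map_sum, map_mul, Complex.conj_ofReal]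
    rw [Finset.sum_mul_sum]
    refine Finset.sum_congr rfl fun t _ => Finset.sum_congr rfl fun s _ => by ring
  rw [Finset.sum_congr rfl fun i _ => h1 i, Finset.sum_comm]
  have h2 : ∀ t : Fin T,
      (∑ i : Fin T, ∑ s : Fin T, ((g t : ℂ) * (d s : ℂ))
          * ((starRingEnd ℂ) (dft T i t) * dft T i s))
        = ((g t : ℂ) * (d t : ℂ)) := by
    intro t
    rw [Finset.sum_comm]
    have h3 : ∀ s : Fin T,
        (∑ i : Fin T, ((g t : ℂ) * (d s : ℂ)) * ((starRingEnd ℂ) (dft T i t) * dft T i s))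
          = ((g t : ℂ) * (d s : ℂ)) * (if t = s then 1 else 0) := by
      intro s
      rw [← Finset.mul_sum, dft_ortho T hT t s]
    rw [Finset.sum_congr rfl fun s _ => h3 s]
    simp [Finset.sum_ite_eq]
  rw [Finset.sum_congr rfl fun t _ => h2 t]
  push_cast
  rfl

/-- Proposition 2 (SILD): if the frequency bandwidths of invariant and variant patterns
never overlap, then with the spectral mask `m` (zero exactly on frequencies where some
variant spectrum is supported, one elsewhere) and the spectral classifier `w = Φ g`,
the prediction is exact on every node; consequently `w` minimizes the empirical risk on
any training subset, and every node has zero squared error (`< ε` for every `ε > 0`),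
no matter how large `‖d_{v,2}‖` is. -/
theorem stmt4 (T : ℕ) (hT : 0 < T) (g : Fin T → ℝ)
    (V : Type*) (d1 d2 : V → (Fin T → ℝ))
    (hno : ∀ u v : V, ∀ i : Fin T,
      ((starRingEnd ℂ) (spec T (d1 u) i) * spec T (d1 u) i) *
        ((starRingEnd ℂ) (spec T (d2 v) i) * spec T (d2 v) i) = 0)
    (m : Fin T → ℂ)
    (hm0 : ∀ i : Fin T,
      (∃ v : V, (starRingEnd ℂ) (spec T (d2 v) i) * spec T (d2 v) i ≠ 0) → m i = 0)
    (hm1 : ∀ i : Fin T,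
      ¬ (∃ v : V, (starRingEnd ℂ) (spec T (d2 v) i) * spec T (d2 v) i ≠ 0) → m i = 1)
    (w : Fin T → ℂ) (hw : w = (dft T).mulVec fun t => (g t : ℂ)) :
    (∀ v : V,
      specPred T w m (spec T (fun t => d1 v t + d2 v t)) = ((∑ t, g t * d1 v t : ℝ) : ℂ)) ∧
    (∀ D : Finset V, ∀ w' : Fin T → ℂ,
      (1 / (D.card : ℝ)) * ∑ v ∈ D,
          ‖specPred T w m (spec T (fun t => d1 v t + d2 v t))
            - ((∑ t, g t * d1 v t : ℝ) : ℂ)‖ ^ 2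
        ≤ (1 / (D.card : ℝ)) * ∑ v ∈ D,
            ‖specPred T w' m (spec T (fun t => d1 v t + d2 v t))
              - ((∑ t, g t * d1 v t : ℝ) : ℂ)‖ ^ 2) ∧
    (∀ ε : ℝ, 0 < ε → ∀ v : V,
      ‖specPred T w m (spec T (fun t => d1 v t + d2 v t))
        - ((∑ t, g t * d1 v t : ℝ) : ℂ)‖ ^ 2 = 0 ∧
      ‖specPred T w m (spec T (fun t => d1 v t + d2 v t))
        - ((∑ t, g t * d1 v t : ℝ) : ℂ)‖ ^ 2 < ε) := by
  have hexact : ∀ v : V,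
      specPred T w m (spec T (fun t => d1 v t + d2 v t)) = ((∑ t, g t * d1 v t : ℝ) : ℂ) := by
    intro v
    have hsplit : ∀ i, spec T (fun t => d1 v t + d2 v t) i = spec T (d1 v) i + spec T (d2 v) i := by
      intro i
      have hv : (fun t => ((d1 v t + d2 v t : ℝ) : ℂ))
          = (fun t => ((d1 v t : ℝ) : ℂ)) + (fun t => ((d2 v t : ℝ) : ℂ)) := by
        funext t; push_cast; rfl
      simp only [spec, hv, Matrix.mulVec_add, Pi.add_apply]
    have hterm : ∀ i : Fin T,
        (starRingEnd ℂ) (w i) * (m i * spec T (fun t => d1 v t + d2 v t) i)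
          = (starRingEnd ℂ) (w i) * spec T (d1 v) i := by
      intro i
      rw [hsplit i]
      by_cases hi : ∃ v' : V, (starRingEnd ℂ) (spec T (d2 v') i) * spec T (d2 v') i ≠ 0
      · have hm := hm0 i hi
        obtain ⟨v', hv'⟩ := hi
        have h11 : (starRingEnd ℂ) (spec T (d1 v) i) * spec T (d1 v) i = 0 := by
          rcases mul_eq_zero.mp (hno v v' i) with h | h
          · exact h
          · exact absurd h hv'
        have hd1 : spec T (d1 v) i = 0 := by
          rcases mul_eq_zero.mp h11 with h | h
          · simpa using h
          · exact h
        rw [hm, hd1]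
        ring
      · have hm := hm1 i hi
        have hd2 : spec T (d2 v) i = 0 := by
          by_contra h
          exact hi ⟨v, mul_ne_zero (by simpa using h) h⟩
        rw [hm, hd2]
        ring
    rw [specPred, Finset.sum_congr rfl fun i _ => hterm i, hw]
    exact spec_dot T hT g (d1 v)
  have hz : ∀ v : V,
      ‖specPred T w m (spec T (fun t => d1 v t + d2 v t))
        - ((∑ t, g t * d1 v t : ℝ) : ℂ)‖ ^ 2 = 0 := by
    intro v
    rw [hexact v]
    simp
  refine ⟨hexact, ?_, ?_⟩
  · intro D w'
    rw [Finset.sum_congr rfl fun v _ => hz v, Finset.sum_const_zero, mul_zero]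
    positivity
  · intro ε hε v
    exact ⟨hz v, by rw [hz v]; exact hε⟩
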